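/- Let c ∈ (0,1), let f be a normalized exterior slit map of capacity c, and let g : f(Δ) → Δ be the holomorphic inverse of f (so g ∘ f = id on Δ). Then for every w ∈ f(Δ), |g'(w)| = (|g(w)|/|w|) · |w − 1| / |(w+1)² − 4·e^c·w|^{1/2}. -/

import Mathlib

/-- The exterior unit disc `Δ = {z : |z| > 1}`. -/
def ExtDisc : Set ℂ := {z : ℂ | 1 < ‖z‖}

/-- A normalized exterior slit map of capacity `c` (with slit length `d`): a function
holomorphic and injective on `Δ`, with image `Δ` minus the radial slit `(1, 1+d]`,
satisfying `f(z)/z → e^c` as `|z| → ∞`, and continuous on `{|z| ≥ 1}` (we regard `f`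
as its continuous extension to the closed exterior disc). -/
def IsSlitMap (c d : ℝ) (f : ℂ → ℂ) : Prop :=
  ContinuousOn f {z : ℂ | 1 ≤ ‖z‖} ∧
  DifferentiableOn ℂ f ExtDisc ∧
  Set.InjOn f ExtDisc ∧
  f '' ExtDisc = ExtDisc \ {w : ℂ | ∃ x : ℝ, 1 < x ∧ x ≤ 1 + d ∧ w = (x : ℂ)} ∧
  Filter.Tendsto (fun z : ℂ => f z / z) (Filter.comap (fun z : ℂ => ‖z‖) Filter.atTop)
    (nhds ((Real.exp c : ℝ) : ℂ))

open Complex Filter Set Metric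

noncomputable section


lemma isOpen_extDisc : IsOpen ExtDisc :=
  isOpen_lt continuous_const continuous_norm

lemma extDisc_ne_zero {z : ℂ} (hz : z ∈ ExtDisc) : z ≠ 0 := by
  intro h; simp [ExtDisc, h] at hz; linarith

lemma sq_ne_one_of_extDisc {z : ℂ} (hz : z ∈ ExtDisc) : z ^ 2 ≠ 1 := by
  intro h
  have : ‖z ^ 2‖ = 1 := by rw [h]; simp
  rw [norm_pow] at this
  have hz' : (1:ℝ) < ‖z‖ := hz
  nlinarith

lemma exists_joukowski_gt {t : ℝ} (ht : 4 < t) : ∃ x : ℝ, 1 < x ∧ x + 2 + x⁻¹ = t := by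
  have hnn : 0 ≤ t * (t - 4) := by nlinarith
  set s := Real.sqrt (t * (t - 4)) with hs
  have hs0 : 0 ≤ s := Real.sqrt_nonneg _
  have hs2 : s ^ 2 = t * (t - 4) := Real.sq_sqrt hnn
  refine ⟨(t - 2 + s) / 2, by nlinarith, ?_⟩
  have hne : t - 2 + s ≠ 0 := by nlinarith
  have hxne : (t - 2 + s) / 2 ≠ 0 := by positivity
  field_simp
  ring_nf
  nlinarith [hs2]

lemma exists_joukowski_lt {t : ℝ} (ht : t < 0) : ∃ x : ℝ, x < -1 ∧ x + 2 + x⁻¹ = t := by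
  have hnn : 0 ≤ t * (t - 4) := by nlinarith
  set s := Real.sqrt (t * (t - 4)) with hs
  have hs0 : 0 ≤ s := Real.sqrt_nonneg _
  have hs2 : s ^ 2 = t * (t - 4) := Real.sq_sqrt hnn
  have hsgt : t < s := by nlinarith [Real.sqrt_nonneg (t * (t-4))]
  refine ⟨(t - 2 - s) / 2, by nlinarith, ?_⟩
  have hne : t - 2 - s ≠ 0 := by nlinarith
  have hxne : (t - 2 - s) / 2 ≠ 0 := by simpa using hne
  field_simp
  ring_nf
  nlinarith [hs2]

/-- Forward claim: on the slit exterior disc, `w + 2 + w⁻¹` avoids `[0, 4e^c]`. -/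
lemma pval_not_mem {c d : ℝ} (hd0 : 0 < d) (hdc : (d + 2) ^ 2 / (d + 1) = 4 * Real.exp c)
    {w : ℂ} (hw : w ∈ ExtDisc) (hns : ¬∃ x : ℝ, 1 < x ∧ x ≤ 1 + d ∧ w = (x : ℂ))
    {t : ℝ} (ht0 : 0 ≤ t) (ht4 : t ≤ 4 * Real.exp c) : w + 2 + w⁻¹ ≠ (t : ℂ) := by
  intro heq
  have hw1 : (1:ℝ) < ‖w‖ := hw
  have hwne : w ≠ 0 := extDisc_ne_zero hw
  have hns1 : 1 < Complex.normSq w := by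
    have := Complex.sq_norm w
    nlinarith
  have him : (w + 2 + w⁻¹).im = w.im * (1 - 1 / Complex.normSq w) := by
    simp [Complex.add_im, Complex.inv_im]
    field_simp
    ring
  have him0 : (w + 2 + w⁻¹).im = 0 := by rw [heq]; simp
  have hwim : w.im = 0 := by
    rw [him] at him0
    rcases mul_eq_zero.1 him0 with h | h
    · exact h
    · exfalso
      have h1 : 1 / Complex.normSq w < 1 := by
        rw [div_lt_one (by linarith)]; exact hns1
      linarith
  set x := w.re with hx
  have hwx : w = (x : ℂ) := by apply Complex.ext <;> simp [hwim, hx]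
  have habs : ‖w‖ = |x| := by rw [hwx]; exact (Complex.norm_real x).trans (Real.norm_eq_abs x)
  have hx1 : 1 < |x| := by rw [← habs]; exact hw1
  have hxne : x ≠ 0 := by
    intro h; rw [h] at hx1; simp at hx1; linarith
  have hreal : x + 2 + x⁻¹ = t := by
    have : ((x + 2 + x⁻¹ : ℝ) : ℂ) = (t : ℂ) := by
      push_cast
      rw [← hwx]; exact heq
    exact_mod_cast this
  have hE : (d + 2) ^ 2 = 4 * Real.exp c * (d + 1) := by
    have h1d : d + 1 ≠ 0 := by linarith
    field_simp at hdc; linarith [hdc]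
  have hxx : x * x⁻¹ = 1 := mul_inv_cancel₀ hxne
  have htx : t * x = x ^ 2 + 2 * x + 1 := by
    have := hreal
    field_simp at this
    linarith [this]
  rcases lt_abs.1 hx1 with hgt | hlt
  · -- x > 1 : must be in the slit, contradiction
    refine hns ⟨x, hgt, ?_, hwx⟩
    by_contra hle
    push_neg at hle
    have hprod : 0 < (x - (1 + d)) * (x * (d + 1) - 1) := by
      apply mul_pos (by linarith)
      nlinarith
    nlinarith [hprod, hE, htx, mul_le_mul_of_nonneg_right ht4 (le_of_lt (lt_trans one_pos hgt))]
  · -- x < -1 : value is negative, contradiction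
    have hxneg : x < -1 := by linarith
    nlinarith [sq_nonneg (x + 1), htx, mul_nonneg ht0 (by linarith : (0:ℝ) ≤ -x)]


lemma slit_identity {c d : ℝ} (hc0 : 0 < c) (hd0 : 0 < d)
    (hdc : (d + 2) ^ 2 / (d + 1) = 4 * Real.exp c) {f : ℂ → ℂ}
    (hcont : ContinuousOn f {z : ℂ | 1 ≤ ‖z‖})
    (hdiff : DifferentiableOn ℂ f ExtDisc)
    (hinj : Set.InjOn f ExtDisc)
    (himg : f '' ExtDisc = ExtDisc \ {w : ℂ | ∃ x : ℝ, 1 < x ∧ x ≤ 1 + d ∧ w = (x:ℂ)})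
    (hlim : Filter.Tendsto (fun z : ℂ => f z / z) (Filter.comap (fun z : ℂ => ‖z‖) Filter.atTop)
      (nhds ((Real.exp c : ℝ) : ℂ))) :
    ∀ z ∈ ExtDisc, f z + 2 + (f z)⁻¹ = (Real.exp c : ℂ) * (z + 2 + z⁻¹) := by
  set S : Set ℂ := {z : ℂ | 1 ≤ ‖z‖} with hS
  set E : ℂ := ((Real.exp c : ℝ) : ℂ) with hE
  set h : ℂ → ℂ := fun z => f z + 2 + (f z)⁻¹ - E * (z + 2 + z⁻¹) with hh
  have hER : (0:ℝ) < Real.exp c := Real.exp_pos c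
  -- membership facts
  have hmemf : ∀ z ∈ ExtDisc, f z ∈ ExtDisc ∧ ¬∃ x : ℝ, 1 < x ∧ x ≤ 1 + d ∧ f z = (x:ℂ) := by
    intro z hz
    have : f z ∈ f '' ExtDisc := ⟨z, hz, rfl⟩
    rw [himg] at this
    exact ⟨this.1, this.2⟩
  -- radial approach to a boundary point
  have hrad : ∀ z0 : ℂ, ‖z0‖ = 1 →
      Tendsto (fun r : ℝ => f ((r:ℂ) * z0)) (nhdsWithin (1:ℝ) (Ioi (1:ℝ))) (nhds (f z0)) := by
    intro z0 hz0
    have hz0S : z0 ∈ S := by simp [hS, hz0]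
    have h1 : Tendsto (fun r : ℝ => (r:ℂ) * z0) (nhdsWithin (1:ℝ) (Ioi (1:ℝ))) (nhdsWithin z0 S) := by
      rw [tendsto_nhdsWithin_iff]
      constructor
      · have : Tendsto (fun r : ℝ => (r:ℂ) * z0) (nhds 1) (nhds ((1:ℂ) * z0)) :=
          (Complex.continuous_ofReal.mul continuous_const).tendsto 1
        simpa using this.mono_left nhdsWithin_le_nhds
      · filter_upwards [self_mem_nhdsWithin] with r hr
        have : ‖(r:ℂ) * z0‖ = r := by
          rw [norm_mul, hz0, Complex.norm_real, Real.norm_eq_abs, mul_one, abs_of_pos (lt_trans one_pos hr)]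
        simp only [hS, Set.mem_setOf_eq, this]
        exact le_of_lt hr
    exact (hcont z0 hz0S).tendsto.comp h1
  -- boundary values have modulus ≥ 1
  have habs1 : ∀ z, ‖z‖ = 1 → 1 ≤ ‖f z‖ := by
    intro z0 hz0
    have T := (continuous_norm.tendsto (f z0)).comp (hrad z0 hz0)
    refine ge_of_tendsto T ?_
    filter_upwards [self_mem_nhdsWithin] with r hr
    have hmem : (r:ℂ) * z0 ∈ ExtDisc := by
      simp only [ExtDisc, Set.mem_setOf_eq, norm_mul, hz0, Complex.norm_real, Real.norm_eq_abs, mul_one]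
      rw [abs_of_pos (lt_trans one_pos hr)]; exact hr
    exact le_of_lt (hmemf _ hmem).1
  have habs1' : ∀ z ∈ S, 1 ≤ ‖f z‖ := by
    intro z hz
    have hz1 : (1:ℝ) ≤ ‖z‖ := hz
    rcases eq_or_lt_of_le hz1 with heq | hlt
    · exact habs1 z heq.symm
    · exact le_of_lt (hmemf z hlt).1
  have hfne : ∀ z ∈ S, f z ≠ 0 := by
    intro z hz h0
    have := habs1' z hz
    rw [h0] at this; simp at this; linarith
  have hzne : ∀ z ∈ S, z ≠ (0:ℂ) := by
    intro z hz h0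
    rw [h0] at hz; simp [hS] at hz; linarith
  -- boundary values are not interior values
  have hbnd : ∀ z0 : ℂ, ‖z0‖ = 1 → f z0 ∉ f '' ExtDisc := by
    intro z0 hz0 hmem
    obtain ⟨z1, hz1, hfz⟩ := hmem
    obtain ⟨r0, hr0, hball0⟩ := Metric.isOpen_iff.1 isOpen_extDisc z1 hz1
    have hanal : AnalyticAt ℂ f z1 := hdiff.analyticAt (isOpen_extDisc.mem_nhds hz1)
    rcases hanal.eventually_constant_or_nhds_le_map_nhds with hconst | hmap
    · obtain ⟨r, hr, hball⟩ := Metric.eventually_nhds_iff.mp hconst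
      set r' := min r r0 with hr'
      have hr'0 : 0 < r' := lt_min hr hr0
      set z2 := z1 + (r'/2 : ℝ) with hz2
      have hd2 : dist z2 z1 = r'/2 := by
        simp [hz2, Complex.dist_eq]
        exact hr'0.le
      have hz2m : z2 ∈ ExtDisc := hball0 (by rw [mem_ball, hd2]; exact lt_of_lt_of_le (by linarith) (min_le_right r r0))
      have : f z2 = f z1 := hball (by rw [hd2]; exact lt_of_lt_of_le (by linarith) (min_le_left r r0))
      have := hinj hz2m hz1 this
      have hr'z : (r' : ℝ) = 0 := by
        have h2 := congrArg (· - z1) this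
        simp [hz2] at h2
        exact_mod_cast h2
      linarith
    · set D := dist z0 z1 with hD
      have hDpos : 0 < D := dist_pos.2 (by
        intro hEq
        rw [hEq] at hz0
        have : (1:ℝ) < ‖z1‖ := hz1
        rw [hz0] at this; linarith)
      set r := min r0 (D/2) with hr
      have hrpos : 0 < r := lt_min hr0 (by linarith)
      have hU : f '' ball z1 r ∈ nhds (f z0) := by
        rw [← hfz]
        exact hmap (image_mem_map (ball_mem_nhds z1 hrpos))
      have T := hrad z0 hz0
      have ev1 : ∀ᶠ t : ℝ in nhdsWithin (1:ℝ) (Ioi (1:ℝ)), f ((t:ℂ) * z0) ∈ f '' Metric.ball z1 r :=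
        T.eventually (eventually_of_mem hU fun _ hw => hw)
      have ev2 : ∀ᶠ t : ℝ in nhdsWithin (1:ℝ) (Ioi (1:ℝ)), dist ((t:ℂ) * z0) z0 < D/2 := by
        have hcm : Tendsto (fun t : ℝ => (t:ℂ) * z0) (nhdsWithin (1:ℝ) (Ioi (1:ℝ))) (nhds z0) := by
          have : Tendsto (fun t : ℝ => (t:ℂ) * z0) (nhds 1) (nhds ((1:ℂ) * z0)) :=
            (Complex.continuous_ofReal.mul continuous_const).tendsto 1
          simpa using this.mono_left nhdsWithin_le_nhds
        exact hcm.eventually (eventually_of_mem (Metric.ball_mem_nhds z0 (by linarith)) fun w hw => hw)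
      have ev3 : ∀ᶠ t : ℝ in nhdsWithin (1:ℝ) (Ioi (1:ℝ)), (1:ℝ) < t := self_mem_nhdsWithin
      obtain ⟨t, ht1, htd, ht3⟩ := (ev1.and (ev2.and ev3)).exists
      set z := (t:ℂ) * z0 with hz
      have hzm : z ∈ ExtDisc := by
        simp only [ExtDisc, Set.mem_setOf_eq, hz, norm_mul, hz0, Complex.norm_real, Real.norm_eq_abs, mul_one]
        rw [abs_of_pos (by linarith)]; exact ht3
      obtain ⟨z', hz'U, hfz'⟩ := ht1
      have hz'm : z' ∈ ExtDisc := hball0 (by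
        have := mem_ball.1 hz'U
        exact mem_ball.2 (lt_of_lt_of_le this (min_le_left _ _)))
      have hzz' : z' = z := hinj hz'm hzm hfz'
      have h1 : dist z z1 < D/2 := by
        have := mem_ball.1 hz'U
        rw [hzz'] at this
        exact lt_of_lt_of_le this (min_le_right _ _)
      have h2 : D ≤ dist z z0 + dist z z1 := by
        have := dist_triangle z0 z z1
        rw [dist_comm z0 z] at this
        linarith [this]
      linarith [htd]
  -- imaginary part of h vanishes on the unit circle
  have hpim : ∀ u : ℂ, ‖u‖ = 1 → (u + 2 + u⁻¹).im = 0 := by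
    intro u hu
    rw [Complex.inv_eq_conj hu]
    simp
  have him0 : ∀ z, ‖z‖ = 1 → (h z).im = 0 := by
    intro z hz
    have hz' : (z + 2 + z⁻¹).im = 0 := hpim z hz
    have hfb : (f z + 2 + (f z)⁻¹).im = 0 := by
      have hnotin := hbnd z hz
      rw [himg] at hnotin
      rcases eq_or_lt_of_le (habs1 z hz) with heq | hlt
      · exact hpim _ heq.symm
      · have : f z ∈ {w : ℂ | ∃ x : ℝ, 1 < x ∧ x ≤ 1 + d ∧ w = (x:ℂ)} := by
          by_contra hns
          exact hnotin ⟨hlt, hns⟩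
        obtain ⟨x, hx1, hxd, hfx⟩ := this
        rw [hfx]
        have : ((x:ℂ))⁻¹ = ((x⁻¹ : ℝ) : ℂ) := by push_cast; ring
        rw [this]
        simp
    simp only [hh, Complex.sub_im, Complex.mul_im, hE, Complex.ofReal_im, Complex.ofReal_re]
    rw [hfb, hz']
    ring
  -- h is continuous on S and differentiable on ExtDisc
  have hch : ContinuousOn h S := by
    apply ContinuousOn.sub
    · exact (hcont.add continuousOn_const).add (hcont.inv₀ hfne)
    · exact continuousOn_const.mul ((continuousOn_id.add continuousOn_const).add
        (continuousOn_id.inv₀ hzne))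
  have hdh : DifferentiableOn ℂ h ExtDisc := by
    have hsub : ExtDisc ⊆ S := fun z hz => by
      simp only [hS, Set.mem_setOf_eq]; exact le_of_lt hz
    apply DifferentiableOn.sub
    · exact (hdiff.add_const 2).add (hdiff.inv fun z hz => hfne z (hsub hz))
    · exact DifferentiableOn.const_mul (((differentiable_id.differentiableOn).add_const 2).add
        ((differentiable_id.differentiableOn).inv fun z hz => extDisc_ne_zero hz)) E
  -- growth at infinity
  have hevbig : ∀ᶠ z : ℂ in comap (fun z : ℂ => ‖z‖) atTop, 1 < ‖z‖ :=
    tendsto_comap.eventually (eventually_gt_atTop 1)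
  have hinv0 : Tendsto (fun z : ℂ => z⁻¹) (comap (fun z : ℂ => ‖z‖) atTop) (nhds 0) := by
    rw [tendsto_zero_iff_norm_tendsto_zero]
    have h1 : Tendsto (fun z : ℂ => (‖z‖)⁻¹) (comap (fun z : ℂ => ‖z‖) atTop) (nhds 0) :=
      tendsto_inv_atTop_zero.comp tendsto_comap
    simpa [norm_inv] using h1
  have hfinv : Tendsto (fun z : ℂ => (f z)⁻¹ * z⁻¹) (comap (fun z : ℂ => ‖z‖) atTop) (nhds 0) := by
    apply squeeze_zero_norm' _ (by simpa only [norm_zero] using hinv0.norm)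
    filter_upwards [hevbig] with z hz
    have hfz : 1 ≤ ‖f z‖ := le_of_lt (hmemf z hz).1
    rw [norm_mul]
    have h1 : ‖(f z)⁻¹‖ ≤ 1 := by
      rw [norm_inv]
      have hpos : (0:ℝ) < ‖f z‖ := by linarith
      have hc : ‖f z‖ * (‖f z‖)⁻¹ = 1 := mul_inv_cancel₀ (ne_of_gt hpos)
      nlinarith [inv_pos.2 hpos]
    calc ‖(f z)⁻¹‖ * ‖z⁻¹‖ ≤ 1 * ‖z⁻¹‖ := by
          apply mul_le_mul_of_nonneg_right h1 (norm_nonneg _)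
      _ = ‖z⁻¹‖ := one_mul _
  have hgrow : Tendsto (fun z : ℂ => h z * z⁻¹) (comap (fun z : ℂ => ‖z‖) atTop) (nhds 0) := by
    have hmain : Tendsto (fun z : ℂ => f z / z + (2 * z⁻¹ + (f z)⁻¹ * z⁻¹)
        - E * (1 + (2 * z⁻¹ + z⁻¹ * z⁻¹))) (comap (fun z : ℂ => ‖z‖) atTop)
        (nhds (E + (2 * 0 + 0) - E * (1 + (2 * 0 + 0 * 0)))) :=
      (hlim.add ((hinv0.const_mul 2).add hfinv)).sub
        ((tendsto_const_nhds.add ((hinv0.const_mul 2).add (hinv0.mul hinv0))).const_mul E)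
    have hval : (E + (2 * 0 + 0) - E * (1 + (2 * 0 + 0 * 0)) : ℂ) = 0 := by ring
    rw [hval] at hmain
    apply hmain.congr'
    filter_upwards [hevbig] with z hz
    have hz0 : z ≠ 0 := by
      intro h0; rw [h0] at hz; simp at hz; linarith
    have hz1 : z * z⁻¹ = 1 := mul_inv_cancel₀ hz0
    simp only [hh, div_eq_mul_inv]
    linear_combination E * hz1
  -- the transported function on the punctured disc
  set q : ℂ → ℂ := fun ζ => h ζ⁻¹ with hqdef
  set a0 : ℂ := limUnder (nhdsWithin (0:ℂ) {(0:ℂ)}ᶜ) q with ha0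
  set Hup : ℂ → ℂ := Function.update q 0 a0 with hHdef
  have habs_pos : Tendsto (fun ζ : ℂ => ‖ζ‖) (nhdsWithin (0:ℂ) {(0:ℂ)}ᶜ)
      (nhdsWithin (0:ℝ) (Ioi (0:ℝ))) := by
    rw [tendsto_nhdsWithin_iff]
    constructor
    · have := (continuous_norm.tendsto 0).mono_left
        (nhdsWithin_le_nhds : nhdsWithin (0:ℂ) {(0:ℂ)}ᶜ ≤ nhds 0)
      simpa using this
    · filter_upwards [self_mem_nhdsWithin] with ζ hζ
      exact norm_pos_iff.2 hζ
  have hmapinv : Tendsto (fun ζ : ℂ => ζ⁻¹) (nhdsWithin (0:ℂ) {(0:ℂ)}ᶜ)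
      (comap (fun z : ℂ => ‖z‖) atTop) := by
    rw [tendsto_comap_iff]
    have h1 : Tendsto (fun r : ℝ => r⁻¹) (nhdsWithin (0:ℝ) (Ioi (0:ℝ))) atTop :=
      tendsto_inv_nhdsGT_zero
    have h2 := h1.comp habs_pos
    apply h2.congr
    intro ζ
    simp [Function.comp, norm_inv]
  have hmaps : MapsTo (fun ζ : ℂ => ζ⁻¹) (ball (0:ℂ) 1 \ {0}) ExtDisc := by
    intro ζ hζ
    have hζ0 : ζ ≠ 0 := hζ.2
    have hζ1 : ‖ζ‖ < 1 := by
      have := mem_ball_zero_iff.1 hζ.1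
      simpa using this
    have hpos : 0 < ‖ζ‖ := norm_pos_iff.2 hζ0
    show (1:ℝ) < ‖ζ⁻¹‖
    rw [norm_inv]
    have hc : ‖ζ‖ * (‖ζ‖)⁻¹ = 1 := mul_inv_cancel₀ (ne_of_gt hpos)
    nlinarith [mul_pos (sub_pos.2 hζ1) (inv_pos.2 hpos)]
  have hqd : DifferentiableOn ℂ q (ball (0:ℂ) 1 \ {0}) := by
    apply DifferentiableOn.comp hdh
      (differentiableOn_inv.mono fun ζ hζ => hζ.2) hmaps
  have hq0' : Tendsto (fun ζ : ℂ => q ζ * ζ) (nhdsWithin (0:ℂ) {(0:ℂ)}ᶜ) (nhds 0) := by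
    have h1 := hgrow.comp hmapinv
    apply h1.congr
    intro ζ
    simp [hqdef, Function.comp, inv_inv]
  have hzt : Tendsto (fun ζ : ℂ => (q ζ - q 0) * ζ) (nhdsWithin (0:ℂ) {(0:ℂ)}ᶜ) (nhds 0) := by
    have h2 : Tendsto (fun ζ : ℂ => q 0 * ζ) (nhdsWithin (0:ℂ) {(0:ℂ)}ᶜ) (nhds (q 0 * 0)) :=
      tendsto_const_nhds.mul (continuous_id.tendsto 0 |>.mono_left nhdsWithin_le_nhds)
    have h3 := hq0'.sub h2
    rw [mul_zero, sub_zero] at h3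
    apply h3.congr
    intro ζ; ring
  have ho : (fun ζ : ℂ => q ζ - q 0) =o[nhdsWithin (0:ℂ) {(0:ℂ)}ᶜ] fun ζ : ℂ => (ζ - 0)⁻¹ := by
    rw [Asymptotics.isLittleO_iff_tendsto']
    · apply hzt.congr
      intro ζ
      rw [sub_zero, div_inv_eq_mul]
    · filter_upwards [self_mem_nhdsWithin] with ζ hζ h0
      rw [sub_zero] at h0
      exact absurd (inv_eq_zero.1 h0) hζ
  have hHd : DifferentiableOn ℂ Hup (ball (0:ℂ) 1) := by
    have := Complex.differentiableOn_update_limUnder_of_isLittleO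
      (ball_mem_nhds (0:ℂ) one_pos) hqd ho
    exact this
  -- continuity of Hup on the closed ball
  have hHc : ContinuousOn Hup (closedBall (0:ℂ) 1) := by
    intro zeta hzeta
    by_cases hz0 : zeta = 0
    · subst hz0
      exact (hHd.continuousOn.continuousAt
        (isOpen_ball.mem_nhds (mem_ball_self one_pos))).continuousWithinAt
    · have hmapsS : MapsTo (fun xi : ℂ => xi⁻¹) (closedBall (0:ℂ) 1 \ {0}) S := by
        intro xi hxi
        have hxi0 : xi ≠ 0 := hxi.2
        have hxi1 : ‖xi‖ ≤ 1 := by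
          have := mem_closedBall_zero_iff.1 hxi.1
          simpa using this
        have hpos : 0 < ‖xi‖ := norm_pos_iff.2 hxi0
        show (1:ℝ) ≤ ‖xi⁻¹‖
        rw [norm_inv]
        have hc : ‖xi‖ * (‖xi‖)⁻¹ = 1 := mul_inv_cancel₀ (ne_of_gt hpos)
        nlinarith [inv_pos.2 hpos]
      have h1 : ContinuousWithinAt q (closedBall (0:ℂ) 1 \ {0}) zeta :=
        ContinuousWithinAt.comp (hch _ (hmapsS ⟨hzeta, hz0⟩))
          ((continuousAt_inv₀ hz0).continuousWithinAt) hmapsS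
      have h2 : ContinuousWithinAt Hup (closedBall (0:ℂ) 1 \ {0}) zeta := by
        apply h1.congr
        · intro xi hxi; exact Function.update_of_ne hxi.2 _ _
        · exact Function.update_of_ne hz0 _ _
      apply h2.mono_of_mem_nhdsWithin
      rw [diff_eq]
      exact inter_mem self_mem_nhdsWithin
        (mem_nhdsWithin_of_mem_nhds (isOpen_compl_singleton.mem_nhds hz0))
  -- imaginary part of Hup vanishes on the unit sphere
  have himS : ∀ zeta : ℂ, ‖zeta‖ = 1 → (Hup zeta).im = 0 := by
    intro zeta hzeta
    have hz0 : zeta ≠ 0 := by intro h0; rw [h0] at hzeta; simp at hzeta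
    rw [hHdef, Function.update_of_ne hz0]
    show (h zeta⁻¹).im = 0
    exact him0 _ (by rw [norm_inv, hzeta]; norm_num)
  -- maximum modulus : exp(±i Hup) bounded by 1 on the closed ball
  have hbound : ∀ σ : ℂ, σ = Complex.I ∨ σ = -Complex.I →
      ∀ zeta ∈ closedBall (0:ℂ) 1, ‖Complex.exp (σ * Hup zeta)‖ ≤ 1 := by
    intro σ hσ zeta hzeta
    have hdc' : DiffContOnCl ℂ (fun xi => Complex.exp (σ * Hup xi)) (ball (0:ℂ) 1) := by
      constructor
      · exact (hHd.const_mul σ).cexp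
      · rw [closure_ball (0:ℂ) one_ne_zero]
        exact (continuousOn_const.mul hHc).cexp
    have hle : ‖Complex.exp (σ * Hup zeta)‖ ≤ 1 := by
      apply Complex.norm_le_of_forall_mem_frontier_norm_le isBounded_ball hdc'
      · intro xi hxi
        rw [frontier_ball (0:ℂ) one_ne_zero] at hxi
        have hxi1 : ‖xi‖ = 1 := by
          have := mem_sphere_zero_iff_norm.1 hxi
          simpa using this
        have himxi := himS xi hxi1
        rw [Complex.norm_exp]
        have hre : (σ * Hup xi).re = 0 := by
          rcases hσ with hI | hI <;> subst hI <;>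
            simp [Complex.mul_re, himxi]
        rw [hre, Real.exp_zero]
      · rw [closure_ball (0:ℂ) one_ne_zero]; exact hzeta
    simpa using hle
  -- hence the imaginary part of Hup vanishes on the open ball
  have himball : ∀ zeta ∈ ball (0:ℂ) 1, (Hup zeta).im = 0 := by
    intro zeta hzeta
    have hzeta' := ball_subset_closedBall hzeta
    have h1 := hbound Complex.I (Or.inl rfl) zeta hzeta'
    have h2 := hbound (-Complex.I) (Or.inr rfl) zeta hzeta'
    rw [Complex.norm_exp] at h1 h2
    have e1 : (Complex.I * Hup zeta).re = -(Hup zeta).im := by simp [Complex.mul_re]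
    have e2 : ((-Complex.I) * Hup zeta).re = (Hup zeta).im := by simp [Complex.mul_re]
    rw [e1] at h1; rw [e2] at h2
    have k1 := Real.exp_le_one_iff.1 h1
    have k2 := Real.exp_le_one_iff.1 h2
    linarith
  -- |exp(i Hup)| ≡ 1 on the ball, so it is constant by maximum modulus
  have hnorm1 : ∀ zeta ∈ ball (0:ℂ) 1, ‖Complex.exp (Complex.I * Hup zeta)‖ = 1 := by
    intro zeta hzeta
    rw [Complex.norm_exp]
    have e1 : (Complex.I * Hup zeta).re = -(Hup zeta).im := by simp [Complex.mul_re]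
    rw [e1, himball zeta hzeta]
    simp
  have hEqexp : EqOn (fun zeta => Complex.exp (Complex.I * Hup zeta))
      (fun _ => Complex.exp (Complex.I * Hup 0)) (ball (0:ℂ) 1) := by
    apply Complex.eqOn_of_isPreconnected_of_isMaxOn_norm
      (convex_ball (0:ℂ) 1).isPreconnected isOpen_ball ((hHd.const_mul Complex.I).cexp)
      (mem_ball_self one_pos)
    rw [isMaxOn_iff]
    intro zeta hzeta
    simp only [Function.comp_apply]
    rw [hnorm1 zeta hzeta, hnorm1 0 (mem_ball_self one_pos)]
  -- derivative of Hup vanishes, so Hup is constant on the ball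
  have hder : ∀ zeta ∈ ball (0:ℂ) 1, deriv Hup zeta = 0 := by
    intro zeta hzeta
    have hH' : HasDerivAt Hup (deriv Hup zeta) zeta :=
      (hHd.differentiableAt (isOpen_ball.mem_nhds hzeta)).hasDerivAt
    have hu' : HasDerivAt (fun xi => Complex.exp (Complex.I * Hup xi))
        (Complex.exp (Complex.I * Hup zeta) * (Complex.I * deriv Hup zeta)) zeta :=
      (hH'.const_mul Complex.I).cexp
    have hev : (fun xi => Complex.exp (Complex.I * Hup xi)) =ᶠ[nhds zeta]
        (fun _ => Complex.exp (Complex.I * Hup 0)) :=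
      eventually_of_mem (isOpen_ball.mem_nhds hzeta) hEqexp
    have hd0 : deriv (fun xi => Complex.exp (Complex.I * Hup xi)) zeta = 0 := by
      rw [hev.deriv_eq]; exact deriv_const _ _
    rw [hu'.deriv] at hd0
    rcases mul_eq_zero.1 hd0 with hcase | hcase
    · exact absurd hcase (Complex.exp_ne_zero _)
    · rcases mul_eq_zero.1 hcase with hcase' | hcase'
      · exact absurd hcase' Complex.I_ne_zero
      · exact hcase'
  have hHconst : ∀ zeta ∈ ball (0:ℂ) 1, Hup zeta = Hup ((2:ℂ)⁻¹) := by
    have hfd : ∀ x ∈ ball (0:ℂ) 1, fderivWithin ℂ Hup (ball (0:ℂ) 1) x = 0 := by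
      intro x hx
      rw [fderivWithin_of_isOpen isOpen_ball hx]
      have h1 : HasDerivAt Hup 0 x := by
        have h2 := (hHd.differentiableAt (isOpen_ball.mem_nhds hx)).hasDerivAt
        rwa [hder x hx] at h2
      rw [h1.hasFDerivAt.fderiv]
      ext1
      simp
    have hhalf : (2:ℂ)⁻¹ ∈ ball (0:ℂ) 1 := by
      rw [mem_ball_zero_iff]
      norm_num
    intro zeta hzeta
    exact (convex_ball (0:ℂ) 1).is_const_of_fderivWithin_eq_zero hHd hfd hzeta hhalf
  -- transfer back: h is constant on ExtDisc
  have hval : ∀ z ∈ ExtDisc, h z = h 2 := by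
    intro z hz
    have hz0 : z ≠ 0 := extDisc_ne_zero hz
    have hz1 : (1:ℝ) < ‖z‖ := hz
    have hmem : z⁻¹ ∈ ball (0:ℂ) 1 := by
      rw [mem_ball_zero_iff, norm_inv]
      have hpos : 0 < ‖z‖ := norm_pos_iff.2 hz0
      have hc : ‖z‖ * (‖z‖)⁻¹ = 1 := mul_inv_cancel₀ (ne_of_gt hpos)
      nlinarith [inv_pos.2 hpos]
    have hcst := hHconst _ hmem
    rw [hHdef, Function.update_of_ne (inv_ne_zero hz0),
      Function.update_of_ne (by norm_num : ((2:ℂ)⁻¹) ≠ (0:ℂ))] at hcst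
    have e1 : q z⁻¹ = h z := by rw [hqdef]; simp [inv_inv]
    have e2 : q (2:ℂ)⁻¹ = h 2 := by rw [hqdef]; simp [inv_inv]
    rw [e1, e2] at hcst
    exact hcst
  have hima : (h 2).im = 0 := by
    have hmem : (2:ℂ)⁻¹ ∈ ball (0:ℂ) 1 := by rw [mem_ball_zero_iff]; norm_num
    have h1 := himball _ hmem
    rw [hHdef, Function.update_of_ne (by norm_num : ((2:ℂ)⁻¹) ≠ (0:ℂ))] at h1
    have e2 : q (2:ℂ)⁻¹ = h 2 := by rw [hqdef]; simp [inv_inv]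
    rw [e2] at h1
    exact h1
  set aR : ℝ := (h 2).re with haR
  have haC : h 2 = (aR : ℂ) := by
    apply Complex.ext
    · simp [haR]
    · simp [hima]
  have hEne : ((Real.exp c : ℝ) : ℂ) ≠ 0 := by
    simp only [ne_eq, Complex.ofReal_eq_zero]
    exact ne_of_gt hER
  -- pin down the constant: aR = 0
  have haR0 : aR = 0 := by
    rcases lt_trichotomy aR 0 with hneg | hzero | hpos
    · exfalso
      have ht : (4:ℝ) < 4 - aR / Real.exp c := by
        have h1 : aR / Real.exp c < 0 := div_neg_of_neg_of_pos hneg hER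
        linarith
      obtain ⟨x, hx1, hxt⟩ := exists_joukowski_gt ht
      have hzx : ((x:ℂ)) ∈ ExtDisc := by
        simp only [ExtDisc, Set.mem_setOf_eq, Complex.norm_real, Real.norm_eq_abs]
        rw [abs_of_pos (by linarith)]; exact hx1
      have hpz : (x:ℂ) + 2 + ((x:ℂ))⁻¹ = ((4 - aR / Real.exp c : ℝ) : ℂ) := by
        rw [show ((x:ℂ))⁻¹ = ((x⁻¹:ℝ):ℂ) from by push_cast; ring]
        rw [show ((x:ℂ)) + 2 + ((x⁻¹:ℝ):ℂ) = ((x + 2 + x⁻¹ : ℝ) : ℂ) from by push_cast; ring]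
        exact congrArg Complex.ofReal hxt
      have hxz : h (x:ℂ) = (aR:ℂ) := by rw [hval _ hzx, haC]
      have key : f (x:ℂ) + 2 + (f (x:ℂ))⁻¹ = ((4 * Real.exp c : ℝ) : ℂ) := by
        rw [hh] at hxz
        have h2 : f (x:ℂ) + 2 + (f (x:ℂ))⁻¹ = E * ((x:ℂ) + 2 + ((x:ℂ))⁻¹) + (aR:ℂ) := by
          linear_combination hxz
        rw [hpz, hE] at h2
        rw [h2]
        push_cast
        field_simp
        try ring
      exact pval_not_mem hd0 hdc (hmemf _ hzx).1 (hmemf _ hzx).2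
        (by positivity) (le_refl _) key
    · exact hzero
    · exfalso
      have ht : -aR / Real.exp c < 0 := by
        apply div_neg_of_neg_of_pos (by linarith) hER
      obtain ⟨x, hx1, hxt⟩ := exists_joukowski_lt ht
      have hzx : ((x:ℂ)) ∈ ExtDisc := by
        simp only [ExtDisc, Set.mem_setOf_eq, Complex.norm_real, Real.norm_eq_abs]
        rw [abs_of_neg (by linarith)]; linarith
      have hpz : (x:ℂ) + 2 + ((x:ℂ))⁻¹ = ((-aR / Real.exp c : ℝ) : ℂ) := by
        rw [show ((x:ℂ))⁻¹ = ((x⁻¹:ℝ):ℂ) from by push_cast; ring]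
        rw [show ((x:ℂ)) + 2 + ((x⁻¹:ℝ):ℂ) = ((x + 2 + x⁻¹ : ℝ) : ℂ) from by push_cast; ring]
        exact congrArg Complex.ofReal hxt
      have hxz : h (x:ℂ) = (aR:ℂ) := by rw [hval _ hzx, haC]
      have key : f (x:ℂ) + 2 + (f (x:ℂ))⁻¹ = ((0 : ℝ) : ℂ) := by
        rw [hh] at hxz
        have h2 : f (x:ℂ) + 2 + (f (x:ℂ))⁻¹ = E * ((x:ℂ) + 2 + ((x:ℂ))⁻¹) + (aR:ℂ) := by
          linear_combination hxz
        rw [hpz, hE] at h2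
        rw [h2]
        push_cast
        field_simp
        try ring
      exact pval_not_mem hd0 hdc (hmemf _ hzx).1 (hmemf _ hzx).2
        (le_refl _) (by positivity) key
  -- conclude
  intro z hz
  have h0 : h z = 0 := by
    rw [hval z hz, haC, haR0]
    simp
  rw [hh] at h0
  rw [hE] at *
  linear_combination h0


lemma final_real (A B u v s t ER : ℝ) (hA : 1 < A) (hB : 1 < B) (hu : 0 < u)
    (hv : 0 < v) (ht : 0 < t) (hs : 0 ≤ s) (hER : 0 < ER)
    (key : t ^ 2 * A = ER * B * v ^ 2) :
    s * t / B ^ 2 / (ER * (u * v / A ^ 2)) = A / B * s / Real.sqrt (ER * B * u ^ 2 / A) := by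
  have hq : Real.sqrt (ER * B * u ^ 2 / A) = u * (t / v) := by
    rw [show ER * B * u ^ 2 / A = (u * (t / v)) ^ 2 from by
      field_simp
      nlinarith [key]]
    exact Real.sqrt_sq (by positivity)
  rw [hq]
  field_simp
  linear_combination s * key


/-- Explicit formula for the modulus of the derivative of the inverse slit map:
`|g'(w)| = (|g(w)|/|w|)·|w−1| / |(w+1)² − 4e^c w|^{1/2}` on `f(Δ)`. -/
theorem slit_map_inverse_derivative_formula
    (c d : ℝ) (f g : ℂ → ℂ)
    (hc0 : 0 < c) (hc1 : c < 1)
    (hd0 : 0 < d) (hdc : (d + 2) ^ 2 / (d + 1) = 4 * Real.exp c)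
    (hf : IsSlitMap c d f)
    (hg : DifferentiableOn ℂ g (f '' ExtDisc))
    (hginv : ∀ z ∈ ExtDisc, g (f z) = z) :
    ∀ w ∈ f '' ExtDisc,
      ‖deriv g w‖ =
        ‖g w‖ / ‖w‖ * ‖w - 1‖ /
          Real.sqrt (‖(w + 1) ^ 2 - 4 * (Real.exp c : ℂ) * w‖) := by
  obtain ⟨hcont, hdiff, hinj, himg, hlim⟩ := hf
  have hident := slit_identity hc0 hd0 hdc hcont hdiff hinj himg hlim
  have himgopen : IsOpen (f '' ExtDisc) := by
    rw [himg]
    have hset : ExtDisc \ {w : ℂ | ∃ x : ℝ, 1 < x ∧ x ≤ 1 + d ∧ w = (x:ℂ)}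
        = ExtDisc ∩ (Complex.ofReal '' Set.Icc 1 (1+d))ᶜ := by
      ext w
      constructor
      · rintro ⟨hw, hns⟩
        refine ⟨hw, ?_⟩
        rintro ⟨x, hx, rfl⟩
        rcases eq_or_lt_of_le hx.1 with heq | hlt
        · have h1 : (1:ℝ) < ‖((x:ℝ) : ℂ)‖ := hw
          rw [← heq] at h1
          simp at h1
        · exact hns ⟨x, hlt, hx.2, rfl⟩
      · rintro ⟨hw, hc⟩
        refine ⟨hw, ?_⟩
        rintro ⟨x, hx1, hxd, rfl⟩
        exact hc ⟨x, ⟨le_of_lt hx1, hxd⟩, rfl⟩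
    rw [hset]
    exact isOpen_extDisc.inter
      (((isCompact_Icc.image Complex.continuous_ofReal).isClosed).isOpen_compl)
  rintro w ⟨z, hz, rfl⟩
  have hzA : (1:ℝ) < ‖z‖ := hz
  have hz0 : z ≠ 0 := extDisc_ne_zero hz
  have hwmem : f z ∈ ExtDisc := by
    have : f z ∈ f '' ExtDisc := ⟨z, hz, rfl⟩
    rw [himg] at this; exact this.1
  have hwA : (1:ℝ) < ‖f z‖ := hwmem
  have hw0 : f z ≠ 0 := extDisc_ne_zero hwmem
  have hz2 : z ^ 2 ≠ 1 := sq_ne_one_of_extDisc hz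
  have hw2 : (f z) ^ 2 ≠ 1 := sq_ne_one_of_extDisc hwmem
  set E : ℂ := ((Real.exp c : ℝ) : ℂ) with hE
  have hER : (0:ℝ) < Real.exp c := Real.exp_pos c
  have hEne : E ≠ 0 := by
    rw [hE]; simp only [ne_eq, Complex.ofReal_eq_zero]; exact ne_of_gt hER
  -- derivatives
  have hga : DifferentiableAt ℂ g (f z) :=
    hg.differentiableAt (himgopen.mem_nhds ⟨z, hz, rfl⟩)
  have hfa : DifferentiableAt ℂ f z :=
    hdiff.differentiableAt (isOpen_extDisc.mem_nhds hz)
  have hcomp : HasDerivAt (g ∘ f) (deriv g (f z) * deriv f z) z :=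
    (hga.hasDerivAt).comp z hfa.hasDerivAt
  have hid : (g ∘ f) =ᶠ[nhds z] id :=
    eventually_of_mem (isOpen_extDisc.mem_nhds hz) (fun ξ hξ => hginv ξ hξ)
  have hprod : deriv g (f z) * deriv f z = 1 :=
    (hcomp.congr_of_eventuallyEq hid.symm).unique (hasDerivAt_id z)
  have hL : HasDerivAt (fun ζ => f ζ + 2 + (f ζ)⁻¹)
      (deriv f z + -(deriv f z) / (f z) ^ 2) z :=
    (hfa.hasDerivAt.add_const 2).add (hfa.hasDerivAt.inv hw0)
  have hR : HasDerivAt (fun ζ : ℂ => E * (ζ + 2 + ζ⁻¹)) (E * (1 + -((z ^ 2)⁻¹))) z :=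
    (((hasDerivAt_id z).add_const 2).add (hasDerivAt_inv hz0)).const_mul E
  have heqf : (fun ζ => f ζ + 2 + (f ζ)⁻¹) =ᶠ[nhds z] (fun ζ => E * (ζ + 2 + ζ⁻¹)) :=
    eventually_of_mem (isOpen_extDisc.mem_nhds hz) (fun ζ hζ => hident ζ hζ)
  have hkey : deriv f z + -(deriv f z) / (f z) ^ 2 = E * (1 + -((z ^ 2)⁻¹)) :=
    (hL.congr_of_eventuallyEq heqf.symm).unique hR
  have hw2i : ((f z) ^ 2) * ((f z) ^ 2)⁻¹ = 1 := mul_inv_cancel₀ (pow_ne_zero 2 hw0)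
  have hz2i : (z ^ 2) * (z ^ 2)⁻¹ = 1 := mul_inv_cancel₀ (pow_ne_zero 2 hz0)
  have hkey2 : deriv f z * (1 - ((f z) ^ 2)⁻¹) = E * (1 - (z ^ 2)⁻¹) := by
    have : deriv f z * (1 - ((f z) ^ 2)⁻¹) = deriv f z + -(deriv f z) / (f z) ^ 2 := by
      field_simp
      ring
    rw [this, hkey]; ring
  have hAne : (1:ℂ) - ((f z) ^ 2)⁻¹ ≠ 0 := by
    intro h0
    have : ((f z) ^ 2)⁻¹ = 1 := by linear_combination -h0
    exact hw2 (inv_eq_one.1 this)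
  have hBne : (1:ℂ) - (z ^ 2)⁻¹ ≠ 0 := by
    intro h0
    have : (z ^ 2)⁻¹ = 1 := by linear_combination -h0
    exact hz2 (inv_eq_one.1 this)
  have hfz' : deriv f z ≠ 0 := by
    intro h0; rw [h0] at hprod; simp at hprod
  have hEBne : E * (1 - (z ^ 2)⁻¹) ≠ 0 := mul_ne_zero hEne hBne
  have hgw : deriv g (f z) = (1 - ((f z) ^ 2)⁻¹) / (E * (1 - (z ^ 2)⁻¹)) := by
    rw [eq_div_iff hEBne, ← hkey2]
    calc deriv g (f z) * (deriv f z * (1 - ((f z) ^ 2)⁻¹))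
        = (deriv g (f z) * deriv f z) * (1 - ((f z) ^ 2)⁻¹) := by ring
      _ = 1 - ((f z) ^ 2)⁻¹ := by rw [hprod]; ring
  -- complex identities
  have hz1 : z * z⁻¹ = 1 := mul_inv_cancel₀ hz0
  have hw1 : f z * (f z)⁻¹ = 1 := mul_inv_cancel₀ hw0
  have hidz := hident z hz
  have hrel : (f z + 1) ^ 2 - 4 * E * (f z) = E * (f z) * (z - 1) ^ 2 * z⁻¹ := by
    linear_combination (f z) * hidz + (-1 : ℂ) * hw1 + (2 * E * f z - E * f z * z) * hz1
  have hckey : (f z + 1) ^ 2 * z = E * f z * (z + 1) ^ 2 := by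
    linear_combination (f z * z) * hidz + (-z : ℂ) * hw1 + (E * f z) * hz1
  -- absolute values
  have hune : z - 1 ≠ 0 := by
    intro h0
    have : z = 1 := by linear_combination h0
    rw [this] at hzA; simp at hzA
  have hvne : z + 1 ≠ 0 := by
    intro h0
    have : z = -1 := by linear_combination h0
    rw [this] at hzA; simp at hzA
  have htne : f z + 1 ≠ 0 := by
    intro h0
    have : f z = -1 := by linear_combination h0
    rw [this] at hwA; simp at hwA
  set A : ℝ := ‖z‖ with hA
  set B : ℝ := ‖f z‖ with hB
  set u : ℝ := ‖z - 1‖ with hu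
  set v : ℝ := ‖z + 1‖ with hv
  set s : ℝ := ‖f z - 1‖ with hs
  set t : ℝ := ‖f z + 1‖ with ht
  have hu0 : 0 < u := norm_pos_iff.2 hune
  have hv0 : 0 < v := norm_pos_iff.2 hvne
  have ht0 : 0 < t := norm_pos_iff.2 htne
  have hs0 : 0 ≤ s := norm_nonneg _
  have habsE : ‖E‖ = Real.exp c := by
    rw [hE, Complex.norm_real, Real.norm_eq_abs, abs_of_pos hER]
  have hkeyabs : t ^ 2 * A = Real.exp c * B * v ^ 2 := by
    have := congrArg norm hckey
    rw [norm_mul, norm_mul, norm_mul, norm_pow, norm_pow, habsE] at this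
    rw [ht, hA, hB, hv]
    linarith [this]
  have habsS : ‖(f z + 1) ^ 2 - 4 * E * (f z)‖ = Real.exp c * B * u ^ 2 / A := by
    rw [hrel, norm_mul, norm_mul, norm_mul, norm_pow, norm_inv, habsE]
    rw [hB, hu, hA]
    field_simp
  have e1 : ‖(1:ℂ) - ((f z) ^ 2)⁻¹‖ = s * t / B ^ 2 := by
    have hdec : (1:ℂ) - ((f z) ^ 2)⁻¹ = ((f z - 1) * (f z + 1)) * ((f z) ^ 2)⁻¹ := by
      field_simp; ring
    rw [hdec, norm_mul, norm_mul, norm_inv, norm_pow]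
    rw [hs, ht, hB]
    field_simp
  have e2 : ‖E * ((1:ℂ) - (z ^ 2)⁻¹)‖ = Real.exp c * (u * v / A ^ 2) := by
    have hdec : (1:ℂ) - (z ^ 2)⁻¹ = ((z - 1) * (z + 1)) * (z ^ 2)⁻¹ := by
      field_simp; ring
    rw [norm_mul, hdec, norm_mul, norm_mul, norm_inv, norm_pow, habsE]
    rw [hu, hv, hA]
    field_simp
  have hgz : ‖g (f z)‖ = A := by rw [hginv z hz, hA]
  rw [hgw, norm_div, e1, e2, hgz, habsS]
  exact final_real A B u v s t (Real.exp c) hzA hwA hu0 hv0 ht0 hs0 hER hkeyabs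


end
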